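/- arXiv:2304.10734 — 2 statements merged into one kernel-verified Lean document; each statement's English description precedes it below -/
import Mathlib

section
/- Let a, b > -1/2, β > 0 and N ≥ 1. Define Ψ : ℝ^N → (-∞, ∞] by Ψ(x) = (2a+1)∑_i (−log sin(x_i/2)) + (2b+1)∑_i (−log cos(x_i/2)) + β ∑_{i<j} [−log sin(x_i/2 + x_j/2) − log sin(x_j/2 − x_i/2)] on the Weyl chamber A = {0 < x₁ < ⋯ < x_N < π}, and Ψ = ∞ otherwise. Then the function x ↦ Ψ(x) − (K/2)‖x‖² with K = (a+b+1)/2 is convex on A; in particular Ψ is K-convex. -/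
open Real Set Finset


lemma phi_hasDeriv (a b : ℝ) {t : ℝ} (ht : t ∈ Ioo 0 π) :
    HasDerivAt (fun t : ℝ => (2*a + 1) * (-Real.log (Real.sin (t / 2)))
      + (2*b + 1) * (-Real.log (Real.cos (t / 2))) - (a + b + 1) / 2 / 2 * t^2)
      ((2*a+1) * (-(Real.cos (t/2) / Real.sin (t/2)) / 2)
        + (2*b+1) * (Real.sin (t/2) / Real.cos (t/2) / 2) - (a+b+1)/2 * t) t := by
  have hs : 0 < Real.sin (t/2) :=
    Real.sin_pos_of_pos_of_lt_pi (by linarith [ht.1]) (by linarith [ht.2, Real.pi_pos])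
  have hc : 0 < Real.cos (t/2) :=
    Real.cos_pos_of_mem_Ioo ⟨by linarith [ht.1, Real.pi_pos], by linarith [ht.2]⟩
  have h2 : HasDerivAt (fun s : ℝ => s / 2) (1/2) t := (hasDerivAt_id t).div_const 2
  have hsin : HasDerivAt (fun s : ℝ => Real.sin (s/2)) (Real.cos (t/2) * (1/2)) t :=
    by have := (Real.hasDerivAt_sin (t/2)).comp t h2; exact this
  have hcos : HasDerivAt (fun s : ℝ => Real.cos (s/2)) (-Real.sin (t/2) * (1/2)) t :=
    by have := (Real.hasDerivAt_cos (t/2)).comp t h2; exact this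
  have hls : HasDerivAt (fun s : ℝ => Real.log (Real.sin (s/2)))
      ((Real.sin (t/2))⁻¹ * (Real.cos (t/2) * (1/2))) t :=
    by have := (Real.hasDerivAt_log hs.ne').comp t hsin; exact this
  have hlc : HasDerivAt (fun s : ℝ => Real.log (Real.cos (s/2)))
      ((Real.cos (t/2))⁻¹ * (-Real.sin (t/2) * (1/2))) t :=
    by have := (Real.hasDerivAt_log hc.ne').comp t hcos; exact this
  have hq : HasDerivAt (fun s : ℝ => (a + b + 1) / 2 / 2 * s^2) ((a+b+1)/2/2 * (2*t)) t := by
    simpa using (hasDerivAt_pow 2 t).const_mul ((a+b+1)/2/2)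
  have := ((hls.neg.const_mul (2*a+1)).add (hlc.neg.const_mul (2*b+1))).sub hq
  refine this.congr_deriv ?_
  field_simp

lemma phi_hasDeriv2 (a b : ℝ) {t : ℝ} (ht : t ∈ Ioo 0 π) :
    HasDerivAt (fun t : ℝ => (2*a+1) * (-(Real.cos (t/2) / Real.sin (t/2)) / 2)
        + (2*b+1) * (Real.sin (t/2) / Real.cos (t/2) / 2) - (a+b+1)/2 * t)
      ((2*a+1) * (1/(Real.sin (t/2))^2/4) + (2*b+1) * (1/(Real.cos (t/2))^2/4)
        - (a+b+1)/2) t := by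
  have hs : 0 < Real.sin (t/2) :=
    Real.sin_pos_of_pos_of_lt_pi (by linarith [ht.1]) (by linarith [ht.2, Real.pi_pos])
  have hc : 0 < Real.cos (t/2) :=
    Real.cos_pos_of_mem_Ioo ⟨by linarith [ht.1, Real.pi_pos], by linarith [ht.2]⟩
  have h2 : HasDerivAt (fun s : ℝ => s / 2) (1/2) t := (hasDerivAt_id t).div_const 2
  have hsin : HasDerivAt (fun s : ℝ => Real.sin (s/2)) (Real.cos (t/2) * (1/2)) t :=
    by have := (Real.hasDerivAt_sin (t/2)).comp t h2; exact this
  have hcos : HasDerivAt (fun s : ℝ => Real.cos (s/2)) (-Real.sin (t/2) * (1/2)) t :=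
    by have := (Real.hasDerivAt_cos (t/2)).comp t h2; exact this
  have hd1 : HasDerivAt (fun s : ℝ => Real.cos (s/2) / Real.sin (s/2))
      ((-Real.sin (t/2) * (1/2) * Real.sin (t/2) - Real.cos (t/2) * (Real.cos (t/2) * (1/2)))
        / (Real.sin (t/2))^2) t := hcos.div hsin hs.ne'
  have hd2 : HasDerivAt (fun s : ℝ => Real.sin (s/2) / Real.cos (s/2))
      ((Real.cos (t/2) * (1/2) * Real.cos (t/2) - Real.sin (t/2) * (-Real.sin (t/2) * (1/2)))
        / (Real.cos (t/2))^2) t := hsin.div hcos hc.ne'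
  have hlin : HasDerivAt (fun s : ℝ => (a+b+1)/2 * s) ((a+b+1)/2) t := by
    simpa using (hasDerivAt_id t).const_mul ((a+b+1)/2)
  have := (((hd1.neg.div_const 2).const_mul (2*a+1)).add
    ((hd2.div_const 2).const_mul (2*b+1))).sub hlin
  have hpyth : Real.sin (t/2)^2 + Real.cos (t/2)^2 = 1 := Real.sin_sq_add_cos_sq _
  have e1 : (-Real.sin (t/2) * (1/2) * Real.sin (t/2) - Real.cos (t/2) * (Real.cos (t/2) * (1/2)))
      = -(1/2) := by linear_combination (-(1/2)) * hpyth
  have e2 : (Real.cos (t/2) * (1/2) * Real.cos (t/2) - Real.sin (t/2) * (-Real.sin (t/2) * (1/2)))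
      = 1/2 := by linear_combination (1/2) * hpyth
  rw [e1, e2] at this
  refine this.congr_deriv ?_
  ring

lemma phi_convexOn (a b : ℝ) (ha : -1/2 < a) (hb : -1/2 < b) :
    ConvexOn ℝ (Ioo 0 π) (fun t : ℝ => (2*a + 1) * (-Real.log (Real.sin (t / 2)))
      + (2*b + 1) * (-Real.log (Real.cos (t / 2))) - (a + b + 1) / 2 / 2 * t^2) := by
  set f : ℝ → ℝ := fun t => (2*a + 1) * (-Real.log (Real.sin (t / 2)))
      + (2*b + 1) * (-Real.log (Real.cos (t / 2))) - (a + b + 1) / 2 / 2 * t^2 with hf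
  set D1 : ℝ → ℝ := fun t => (2*a+1) * (-(Real.cos (t/2) / Real.sin (t/2)) / 2)
        + (2*b+1) * (Real.sin (t/2) / Real.cos (t/2) / 2) - (a+b+1)/2 * t with hD1
  have hderiv : ∀ t ∈ Ioo 0 π, deriv f t = D1 t := fun t ht => (phi_hasDeriv a b ht).deriv
  have heq : ∀ t ∈ Ioo 0 π, deriv f =ᶠ[nhds t] D1 := by
    intro t ht
    filter_upwards [isOpen_Ioo.mem_nhds ht] with s hs using hderiv s hs
  apply convexOn_of_deriv2_nonneg (convex_Ioo 0 π)
  · intro t ht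
    exact (phi_hasDeriv a b ht).differentiableAt.continuousAt.continuousWithinAt
  · rw [interior_Ioo]
    intro t ht
    exact (phi_hasDeriv a b ht).differentiableAt.differentiableWithinAt
  · rw [interior_Ioo]
    intro t ht
    exact (((phi_hasDeriv2 a b ht).differentiableAt.congr_of_eventuallyEq
      (heq t ht)).differentiableWithinAt)
  · rw [interior_Ioo]
    intro t ht
    have h2 : deriv (deriv f) t = deriv D1 t := (heq t ht).deriv_eq
    have h3 : deriv D1 t = (2*a+1) * (1/(Real.sin (t/2))^2/4)
        + (2*b+1) * (1/(Real.cos (t/2))^2/4) - (a+b+1)/2 := (phi_hasDeriv2 a b ht).deriv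
    show 0 ≤ deriv (deriv f) t
    rw [h2, h3]
    have hs : 0 < Real.sin (t/2) :=
      Real.sin_pos_of_pos_of_lt_pi (by linarith [ht.1]) (by linarith [ht.2, Real.pi_pos])
    have hc : 0 < Real.cos (t/2) :=
      Real.cos_pos_of_mem_Ioo ⟨by linarith [ht.1, Real.pi_pos], by linarith [ht.2]⟩
    have hs2 : 0 < Real.sin (t/2)^2 := by positivity
    have hc2 : 0 < Real.cos (t/2)^2 := by positivity
    have hsle : Real.sin (t/2)^2 ≤ 1 := Real.sin_sq_le_one _
    have hcle : Real.cos (t/2)^2 ≤ 1 := Real.cos_sq_le_one _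
    have hus : 1 ≤ 1 / Real.sin (t/2)^2 := by rw [le_div_iff₀ hs2]; simpa using hsle
    have huc : 1 ≤ 1 / Real.cos (t/2)^2 := by rw [le_div_iff₀ hc2]; simpa using hcle
    have ha' : (0:ℝ) < 2*a+1 := by linarith
    have hb' : (0:ℝ) < 2*b+1 := by linarith
    nlinarith [mul_le_mul_of_nonneg_left hus ha'.le, mul_le_mul_of_nonneg_left huc hb'.le]

lemma convexOn_neg_log_sin : ConvexOn ℝ (Ioo 0 π) (fun t : ℝ => -Real.log (Real.sin t)) := by
  refine ⟨convex_Ioo 0 π, fun u hu v hv p q hp hq hpq => ?_⟩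
  simp only [smul_eq_mul]
  have hsu : 0 < Real.sin u := Real.sin_pos_of_pos_of_lt_pi hu.1 hu.2
  have hsv : 0 < Real.sin v := Real.sin_pos_of_pos_of_lt_pi hv.1 hv.2
  have hconc : p * Real.sin u + q * Real.sin v ≤ Real.sin (p * u + q * v) := by
    have := strictConcaveOn_sin_Icc.concaveOn.2
      (Ioo_subset_Icc_self hu) (Ioo_subset_Icc_self hv) hp hq hpq
    simpa [smul_eq_mul] using this
  have hcomb : 0 < p * Real.sin u + q * Real.sin v := by
    rcases eq_or_lt_of_le hp with h | h
    · have hq1 : q = 1 := by linarith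
      simp [← h, hq1, hsv]
    · nlinarith [mul_nonneg hq hsv.le]
  have h1 : Real.log (p * Real.sin u + q * Real.sin v) ≤ Real.log (Real.sin (p * u + q * v)) :=
    Real.log_le_log hcomb hconc
  have h2 : p * Real.log (Real.sin u) + q * Real.log (Real.sin v)
      ≤ Real.log (p * Real.sin u + q * Real.sin v) := by
    have := strictConcaveOn_log_Ioi.concaveOn.2 (mem_Ioi.2 hsu) (mem_Ioi.2 hsv) hp hq hpq
    simpa [smul_eq_mul] using this
  linarith

lemma convexOn_comp_affineLike {N : ℕ} {s : Set ℝ} {f : ℝ → ℝ} (hf : ConvexOn ℝ s f)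
    {A : Set (Fin N → ℝ)} (hA : Convex ℝ A) (g : (Fin N → ℝ) → ℝ)
    (hg : ∀ (x y : Fin N → ℝ) (p q : ℝ), p + q = 1 → g (p • x + q • y) = p * g x + q * g y)
    (hmem : ∀ x ∈ A, g x ∈ s) : ConvexOn ℝ A (fun x => f (g x)) := by
  refine ⟨hA, fun x hx y hy p q hp hq hpq => ?_⟩
  simp only [smul_eq_mul]
  rw [hg x y p q hpq]
  have := hf.2 (hmem x hx) (hmem y hy) hp hq hpq
  simpa [smul_eq_mul] using this

lemma convexA {N : ℕ} :
    Convex ℝ {x : Fin N → ℝ | StrictMono x ∧ ∀ i, x i ∈ Set.Ioo 0 π} := by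
  intro x hx y hy p q hp hq hpq
  constructor
  · intro i j hij
    simp only [Pi.add_apply, Pi.smul_apply, smul_eq_mul]
    rcases eq_or_lt_of_le hp with h | h
    · have hq1 : q = 1 := by linarith
      have := hy.1 hij
      rw [← h, hq1]; simpa using this
    · have h1 : p * x i < p * x j := by
        have := hx.1 hij; nlinarith
      have h2 : q * y i ≤ q * y j := by
        have := (hy.1 hij).le; nlinarith
      linarith
  · intro i
    simp only [Pi.add_apply, Pi.smul_apply, smul_eq_mul]
    obtain ⟨hx0, hxπ⟩ := hx.2 i
    obtain ⟨hy0, hyπ⟩ := hy.2 i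
    rcases eq_or_lt_of_le hp with h | h
    · have hq1 : q = 1 := by linarith
      rw [← h, hq1]; simpa using hy.2 i
    · constructor
      · nlinarith [mul_nonneg hq hy0.le]
      · nlinarith [mul_le_mul_of_nonneg_left hyπ.le hq]

lemma convexOn_finsetSum {ι : Type*} {E : Type*} [AddCommGroup E] [Module ℝ E]
    (t : Finset ι) {s : Set E} (hs : Convex ℝ s) {f : ι → E → ℝ}
    (h : ∀ i ∈ t, ConvexOn ℝ s (f i)) : ConvexOn ℝ s (fun x => ∑ i ∈ t, f i x) := by
  classical
  induction t using Finset.cons_induction with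
  | empty => simpa using convexOn_const 0 hs
  | cons i t hit ih =>
      simp only [Finset.sum_cons]
      exact (h i (Finset.mem_cons_self i t)).add (ih fun j hj => h j (Finset.mem_cons_of_mem hj))

/-- K-convexity of the potential `Ψ` of the trigonometric beta Jacobi SDE:
for `a, b > -1/2` and `β > 0`, the function `x ↦ Ψ(x) − (K/2)‖x‖²` with
`K = (a+b+1)/2` is convex on the Weyl chamber `A = {0 < x₁ < ⋯ < x_N < π}`. -/
theorem psi_K_convex (N : ℕ) (a b β : ℝ)
    (ha : -1/2 < a) (hb : -1/2 < b) (hβ : 0 < β) :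
    ConvexOn ℝ
      {x : Fin N → ℝ | StrictMono x ∧ ∀ i, x i ∈ Set.Ioo 0 π}
      (fun x : Fin N → ℝ =>
        ((2*a + 1) * ∑ i, (-Real.log (Real.sin (x i / 2)))
          + (2*b + 1) * ∑ i, (-Real.log (Real.cos (x i / 2)))
          + β * ∑ i, ∑ j, if i < j then
              (-Real.log (Real.sin (x i / 2 + x j / 2))
                - Real.log (Real.sin (x j / 2 - x i / 2))) else 0)
        - (a + b + 1) / 2 / 2 * ∑ i, (x i)^2) := by
  set A := {x : Fin N → ℝ | StrictMono x ∧ ∀ i, x i ∈ Set.Ioo 0 π} with hAdef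
  have hA : Convex ℝ A := convexA
  set φ : ℝ → ℝ := fun t => (2*a + 1) * (-Real.log (Real.sin (t / 2)))
      + (2*b + 1) * (-Real.log (Real.cos (t / 2))) - (a + b + 1) / 2 / 2 * t^2 with hφ
  have hfun : (fun x : Fin N → ℝ =>
        ((2*a + 1) * ∑ i, (-Real.log (Real.sin (x i / 2)))
          + (2*b + 1) * ∑ i, (-Real.log (Real.cos (x i / 2)))
          + β * ∑ i, ∑ j, if i < j then
              (-Real.log (Real.sin (x i / 2 + x j / 2))
                - Real.log (Real.sin (x j / 2 - x i / 2))) else 0)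
        - (a + b + 1) / 2 / 2 * ∑ i, (x i)^2)
      = (fun x : Fin N → ℝ => (∑ i, φ (x i))
          + β * ∑ i, ∑ j, if i < j then
              (-Real.log (Real.sin (x i / 2 + x j / 2))
                - Real.log (Real.sin (x j / 2 - x i / 2))) else 0) := by
    funext x
    simp only [hφ, Finset.sum_sub_distrib, Finset.sum_add_distrib, ← Finset.mul_sum]
    ring
  rw [hfun]
  have h1 : ConvexOn ℝ A (fun x : Fin N → ℝ => ∑ i, φ (x i)) := by
    refine convexOn_finsetSum Finset.univ hA (fun i _ => ?_)
    refine convexOn_comp_affineLike (phi_convexOn a b ha hb) hA (fun x => x i) ?_ ?_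
    · intro x y p q hpq
      simp [smul_eq_mul]
    · exact fun x hx => hx.2 i
  have h2 : ConvexOn ℝ A (fun x : Fin N → ℝ => ∑ i, ∑ j, if i < j then
              (-Real.log (Real.sin (x i / 2 + x j / 2))
                - Real.log (Real.sin (x j / 2 - x i / 2))) else 0) := by
    refine convexOn_finsetSum Finset.univ hA (fun i _ => ?_)
    refine convexOn_finsetSum Finset.univ hA (fun j _ => ?_)
    by_cases hij : i < j
    · simp only [if_pos hij]
      have c1 : ConvexOn ℝ A (fun x : Fin N → ℝ => -Real.log (Real.sin (x i / 2 + x j / 2))) := by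
        refine convexOn_comp_affineLike convexOn_neg_log_sin hA
          (fun x => x i / 2 + x j / 2) ?_ ?_
        · intro x y p q hpq
          simp only [Pi.add_apply, Pi.smul_apply, smul_eq_mul]
          ring
        · intro x hx
          obtain ⟨h0i, hπi⟩ := hx.2 i
          obtain ⟨h0j, hπj⟩ := hx.2 j
          exact ⟨by linarith, by linarith⟩
      have c2 : ConvexOn ℝ A (fun x : Fin N → ℝ => -Real.log (Real.sin (x j / 2 - x i / 2))) := by
        refine convexOn_comp_affineLike convexOn_neg_log_sin hA
          (fun x => x j / 2 - x i / 2) ?_ ?_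
        · intro x y p q hpq
          simp only [Pi.add_apply, Pi.smul_apply, smul_eq_mul]
          ring
        · intro x hx
          obtain ⟨h0i, hπi⟩ := hx.2 i
          obtain ⟨h0j, hπj⟩ := hx.2 j
          have hlt : x i < x j := hx.1 hij
          exact ⟨by linarith, by linarith⟩
      have := c1.add c2
      simpa [sub_eq_add_neg] using (show ConvexOn ℝ A (fun x : Fin N → ℝ => -Real.log (Real.sin (x i / 2 + x j / 2)) + -Real.log (Real.sin (x j / 2 - x i / 2))) from this)
    · simp only [if_neg hij]
      exact convexOn_const 0 hA
  have h2' : ConvexOn ℝ A (fun x : Fin N → ℝ => β * ∑ i, ∑ j, if i < j then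
              (-Real.log (Real.sin (x i / 2 + x j / 2))
                - Real.log (Real.sin (x j / 2 - x i / 2))) else 0) := by
    have := h2.smul hβ.le
    simpa [smul_eq_mul] using this
  exact h1.add h2'
end

section
/- For each N, let M^{(N)} be a continuous martingale with M^{(N)}_0 = 0 a.s. and [M^{(N)}]_∞ = ∞ a.s., and suppose the quadratic variation [M^{(N)}]_t converges in probability in C([0,T]) (with the sup norm) to a deterministic continuous function m_t. Let B^{(N)} be the DDS Brownian motion with M^{(N)}_t = B^{(N)}_{[M^{(N)}]_t}, and set A^{(N)}_t = B^{(N)}_{m_t}. Then sup_{0 ≤ t ≤ T} |M^{(N)}_t − A^{(N)}_t| → 0 in probability as N → ∞. -/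
open MeasureTheory ProbabilityTheory Filter Set

/-- A standard one-dimensional Brownian motion (indexed by `t ≥ 0`). -/
def IsStandardBM {Ω : Type*} [MeasurableSpace Ω] (P : Measure Ω)
    (B : ℝ → Ω → ℝ) : Prop :=
  (∀ᵐ ω ∂P, B 0 ω = 0) ∧
  (∀ᵐ ω ∂P, Continuous fun t => B t ω) ∧
  (∀ t : ℝ, Measurable (B t)) ∧
  (∀ s t : ℝ, 0 ≤ s → s ≤ t →
    Measure.map (fun ω => B t ω - B s ω) P = gaussianReal 0 (Real.toNNReal (t - s))) ∧
  (∀ u : ℕ → ℝ, Monotone u → (∀ n, 0 ≤ u n) →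
    iIndepFun
      (fun n ω => B (u (n + 1)) ω - B (u n) ω) P)

noncomputable def sumL (c : ℕ) : (Fin c → ℝ) → (Fin c → ℝ) :=
  fun x k => ∑ i : Fin c, if i ≤ k then x i else 0

lemma sumL_measurable (c : ℕ) : Measurable (sumL c) := by
  apply measurable_pi_lambda
  intro k
  apply Finset.measurable_sum
  intro i _
  by_cases h : i ≤ k
  · simpa [h] using measurable_pi_apply i
  · simp [h, measurable_const]

lemma bm_findim {Ω : Type*} [MeasurableSpace Ω] {P : Measure Ω} [IsProbabilityMeasure P]
    {B : ℝ → Ω → ℝ} (hB : IsStandardBM P B) (c : ℕ) (u : ℕ → ℝ)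
    (hu : Monotone u) (hu0 : ∀ k, 0 ≤ u k) (h0 : u 0 = 0) :
    Measure.map (fun ω (i : Fin c) => B (u ((i : ℕ) + 1)) ω) P =
      Measure.map (sumL c)
        (Measure.pi fun i : Fin c => gaussianReal 0 (u ((i : ℕ) + 1) - u (i : ℕ)).toNNReal) := by
  obtain ⟨hB0, hBcont, hBmeas, hBinc, hBind⟩ := hB
  set Xn : ℕ → Ω → ℝ := fun n ω => B (u (n + 1)) ω - B (u n) ω with hXn
  have hXnmeas : ∀ n, Measurable (Xn n) := fun n => (hBmeas _).sub (hBmeas _)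
  set X : Ω → Fin c → ℝ := fun ω i => Xn i ω with hX
  have hXmeas : Measurable X := measurable_pi_lambda _ fun i => hXnmeas i
  have hindep := hBind u hu hu0
  have hXlaw : Measure.map X P =
      Measure.pi fun i : Fin c => gaussianReal 0 (u ((i : ℕ) + 1) - u (i : ℕ)).toNNReal := by
    symm
    apply Measure.pi_eq
    intro s hs
    rw [Measure.map_apply hXmeas (MeasurableSet.univ_pi hs)]
    set sets : ℕ → Set ℝ := fun n => if h : n < c then s ⟨n, h⟩ else univ with hsets
    have hsetsm : ∀ n, MeasurableSet (sets n) := by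
      intro n
      by_cases h : n < c
      · simpa [sets, dif_pos h] using hs ⟨n, h⟩
      · simp [sets, dif_neg h]
    have h1 : X ⁻¹' (Set.pi univ s) = ⋂ n ∈ Finset.range c, Xn n ⁻¹' sets n := by
      ext ω
      simp only [Set.mem_preimage, Set.mem_pi, Set.mem_univ, forall_true_left,
        Set.mem_iInter, Finset.mem_range]
      constructor
      · intro h n hn
        simpa [sets, dif_pos hn] using h ⟨n, hn⟩
      · intro h i
        have := h (i : ℕ) i.2
        simpa [sets, dif_pos i.2] using this
    rw [h1, iIndepFun_iff_measure_inter_preimage_eq_mul] at *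
    rw [hindep (Finset.range c) (fun n _ => hsetsm n)]
    have hfac : ∀ n, P (Xn n ⁻¹' sets n) =
        gaussianReal 0 (u (n + 1) - u n).toNNReal (sets n) := by
      intro n
      rw [← hBinc (u n) (u (n + 1)) (hu0 n) (hu (Nat.le_succ n)),
        Measure.map_apply (hXnmeas n) (hsetsm n)]
    calc ∏ n ∈ Finset.range c, P (Xn n ⁻¹' sets n)
        = ∏ n ∈ Finset.range c, gaussianReal 0 (u (n + 1) - u n).toNNReal (sets n) :=
          Finset.prod_congr rfl fun n _ => hfac n
      _ = ∏ i : Fin c, gaussianReal 0 (u ((i : ℕ) + 1) - u (i : ℕ)).toNNReal (sets (i : ℕ)) :=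
          (Fin.prod_univ_eq_prod_range (fun n => gaussianReal 0 (u (n + 1) - u n).toNNReal (sets n)) c).symm
      _ = ∏ i : Fin c, gaussianReal 0 (u ((i : ℕ) + 1) - u (i : ℕ)).toNNReal (s i) := by
          refine Finset.prod_congr rfl fun i _ => ?_
          congr 1
          simp [sets, dif_pos i.2]
  -- a.e. identity
  have hae : (fun ω (i : Fin c) => B (u ((i : ℕ) + 1)) ω) =ᵐ[P] (sumL c) ∘ X := by
    filter_upwards [hB0] with ω hω
    funext k
    have htel : ∀ n : ℕ, ∑ i ∈ Finset.range n, Xn i ω = B (u n) ω - B (u 0) ω :=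
      fun n => Finset.sum_range_sub (fun i => B (u i) ω) n
    have h2 : sumL c (X ω) k = ∑ i ∈ Finset.range ((k : ℕ) + 1), Xn i ω := by
      unfold sumL
      have e1 : (∑ i : Fin c, if i ≤ k then X ω i else 0)
          = ∑ n ∈ Finset.range c, (if n ≤ (k : ℕ) then Xn n ω else 0) := by
        rw [← Fin.sum_univ_eq_sum_range (fun n => if n ≤ (k : ℕ) then Xn n ω else 0) c]
        refine Finset.sum_congr rfl fun i _ => ?_
        rfl
      have e2 : Finset.filter (fun n => n ≤ (k : ℕ)) (Finset.range c)
          = Finset.range ((k : ℕ) + 1) := by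
        ext n
        simp only [Finset.mem_filter, Finset.mem_range, Nat.lt_succ_iff]
        exact ⟨fun h => h.2, fun h => ⟨lt_of_le_of_lt (Nat.lt_succ_iff.mp (Nat.lt_succ_of_le h)) k.2, h⟩⟩
      rw [e1, ← Finset.sum_filter, e2]
    rw [Function.comp_apply, h2, htel, h0, hω, sub_zero]
  rw [Measure.map_congr hae, ← hXlaw,
    Measure.map_map (sumL_measurable c) hXmeas]

lemma bm_map_eval_eq {Ω : Type*} [MeasurableSpace Ω] {P : Measure Ω} [IsProbabilityMeasure P]
    {B B' : ℝ → Ω → ℝ} (hB : IsStandardBM P B) (hB' : IsStandardBM P B') (c : ℕ) (u : ℕ → ℝ)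
    (hu : Monotone u) (hu0 : ∀ k, 0 ≤ u k) (h0 : u 0 = 0) :
    Measure.map (fun ω (i : Fin c) => B (u ((i : ℕ) + 1)) ω) P =
      Measure.map (fun ω (i : Fin c) => B' (u ((i : ℕ) + 1)) ω) P := by
  rw [bm_findim hB c u hu hu0 h0, bm_findim hB' c u hu hu0 h0]

def pairOK (K δ : ℝ) (p : ℚ × ℚ) : Prop :=
  0 ≤ (p.1 : ℝ) ∧ (p.1 : ℝ) ≤ K ∧ 0 ≤ (p.2 : ℝ) ∧ (p.2 : ℝ) ≤ K ∧ |(p.1 : ℝ) - (p.2 : ℝ)| ≤ δ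

def badE {Ω : Type*} (B : ℝ → Ω → ℝ) (K δ ε : ℝ) : Set Ω :=
  ⋃ (p : ℚ × ℚ) (_ : pairOK K δ p), {ω | ε ≤ |B (p.1 : ℝ) ω - B (p.2 : ℝ) ω|}

lemma badE_meas {Ω : Type*} [MeasurableSpace Ω] {B : ℝ → Ω → ℝ}
    (hBmeas : ∀ t : ℝ, Measurable (B t)) (K δ ε : ℝ) :
    MeasurableSet (badE B K δ ε) := by
  apply MeasurableSet.iUnion
  intro p
  apply MeasurableSet.iUnion
  intro _
  exact measurableSet_le measurable_const ((hBmeas _).sub (hBmeas _)).abs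

lemma finU_prob_eq {Ω : Type*} [MeasurableSpace Ω] {P : Measure Ω} [IsProbabilityMeasure P]
    {B B' : ℝ → Ω → ℝ} (hB : IsStandardBM P B) (hB' : IsStandardBM P B') (ε : ℝ)
    (S : Finset (ℚ × ℚ)) (hOK : ∀ p ∈ S, 0 ≤ (p.1 : ℝ) ∧ 0 ≤ (p.2 : ℝ)) :
    P (⋃ p ∈ S, {ω | ε ≤ |B (p.1 : ℝ) ω - B (p.2 : ℝ) ω|}) =
      P (⋃ p ∈ S, {ω | ε ≤ |B' (p.1 : ℝ) ω - B' (p.2 : ℝ) ω|}) := by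
  classical
  by_cases hS : S = ∅
  · simp [hS]
  set F : Finset ℝ := S.image (fun p => ((p.1 : ℝ))) ∪ S.image (fun p => ((p.2 : ℝ))) with hF
  have hFne : F.Nonempty := by
    obtain ⟨p, hp⟩ := Finset.nonempty_iff_ne_empty.2 hS
    exact ⟨(p.1 : ℝ), Finset.mem_union_left _ (Finset.mem_image_of_mem _ hp)⟩
  have hc : 0 < F.card := Finset.card_pos.2 hFne
  set c := F.card with hcdef
  set mo := F.orderIsoOfFin rfl with hmo
  have hFnonneg : ∀ x ∈ F, (0:ℝ) ≤ x := by
    intro x hx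
    simp only [F, Finset.mem_union, Finset.mem_image] at hx
    rcases hx with ⟨p, hp, rfl⟩ | ⟨p, hp, rfl⟩
    · exact (hOK p hp).1
    · exact (hOK p hp).2
  set u : ℕ → ℝ := fun k => if h : k = 0 then 0 else
    (mo ⟨min (k-1) (c-1), by omega⟩ : ℝ) with hu
  have humono : Monotone u := by
    intro k l hkl
    rcases Nat.eq_zero_or_pos k with rfl | hk
    · rcases Nat.eq_zero_or_pos l with rfl | hl
      · exact le_refl _
      · simp only [u, dif_pos rfl, dif_neg (Nat.pos_iff_ne_zero.mp hl)]
        exact hFnonneg _ (mo _).2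
    · have hl : 0 < l := lt_of_lt_of_le hk hkl
      simp only [u, dif_neg (Nat.pos_iff_ne_zero.mp hk), dif_neg (Nat.pos_iff_ne_zero.mp hl)]
      have : (⟨min (k-1) (c-1), by omega⟩ : Fin c) ≤ ⟨min (l-1) (c-1), by omega⟩ := by
        simp only [Fin.mk_le_mk]
        exact min_le_min (by omega) le_rfl
      exact mo.monotone this
  have hu0 : u 0 = 0 := by simp [u]
  have hu0' : ∀ k, 0 ≤ u k := by
    intro k
    rcases Nat.eq_zero_or_pos k with rfl | hk
    · simp [u]
    · simp only [u, dif_neg (Nat.pos_iff_ne_zero.mp hk)]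
      exact hFnonneg _ (mo _).2
  have huv : ∀ i : Fin c, u ((i:ℕ) + 1) = (mo i : ℝ) := by
    intro i
    have hidx : (⟨min ((i:ℕ) + 1 - 1) (c-1), by omega⟩ : Fin c) = i :=
      Fin.ext (by have := i.isLt; simp only []; omega)
    simp only [u, dif_neg (Nat.succ_ne_zero _), hidx]
  set A : Set (Fin c → ℝ) := ⋃ (i : Fin c) (j : Fin c)
      (_ : ∃ p ∈ S, (p.1 : ℝ) = (mo i : ℝ) ∧ (p.2 : ℝ) = (mo j : ℝ)),
      {x : Fin c → ℝ | ε ≤ |x i - x j|} with hA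
  have hAmeas : MeasurableSet A := by
    apply MeasurableSet.iUnion; intro i
    apply MeasurableSet.iUnion; intro j
    apply MeasurableSet.iUnion; intro _
    exact measurableSet_le measurable_const ((measurable_pi_apply i).sub (measurable_pi_apply j)).abs
  have hpre : ∀ C : ℝ → Ω → ℝ,
      (⋃ p ∈ S, {ω | ε ≤ |C (p.1 : ℝ) ω - C (p.2 : ℝ) ω|}) =
        (fun ω (i : Fin c) => C (mo i : ℝ) ω) ⁻¹' A := by
    intro C
    ext ω
    simp only [mem_iUnion, mem_preimage, mem_setOf_eq, A]
    constructor
    · rintro ⟨p, hp, hle⟩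
      have h1 : (p.1 : ℝ) ∈ F := Finset.mem_union_left _ (Finset.mem_image_of_mem _ hp)
      have h2 : (p.2 : ℝ) ∈ F := Finset.mem_union_right _ (Finset.mem_image_of_mem _ hp)
      refine ⟨mo.symm ⟨_, h1⟩, mo.symm ⟨_, h2⟩, ⟨p, hp, ?_, ?_⟩, ?_⟩
      · rw [OrderIso.apply_symm_apply]
      · rw [OrderIso.apply_symm_apply]
      · simp only [OrderIso.apply_symm_apply]
        exact hle
    · rintro ⟨i, j, ⟨p, hp, h1, h2⟩, hle⟩
      exact ⟨p, hp, by rw [h1, h2]; exact hle⟩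
  have hBmeas := hB.2.2.1
  have hB'meas := hB'.2.2.1
  have hvm : Measurable (fun ω (i : Fin c) => B (mo i : ℝ) ω) :=
    measurable_pi_lambda _ fun i => hBmeas _
  have hvm' : Measurable (fun ω (i : Fin c) => B' (mo i : ℝ) ω) :=
    measurable_pi_lambda _ fun i => hB'meas _
  have hmapeq := bm_map_eval_eq hB hB' c u humono hu0' hu0
  have hveq : (fun ω (i : Fin c) => B (u ((i:ℕ) + 1)) ω) = fun ω i => B (mo i : ℝ) ω := by
    funext ω i; rw [huv i]
  have hveq' : (fun ω (i : Fin c) => B' (u ((i:ℕ) + 1)) ω) = fun ω i => B' (mo i : ℝ) ω := by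
    funext ω i; rw [huv i]
  rw [hveq, hveq'] at hmapeq
  rw [hpre B, hpre B',
    ← Measure.map_apply hvm hAmeas, ← Measure.map_apply hvm' hAmeas, hmapeq]

noncomputable instance pairOK.dec (K δ : ℝ) : DecidablePred (pairOK K δ) := by
  unfold pairOK; infer_instance

noncomputable def qqEnum : ℕ → ℚ × ℚ := (exists_surjective_nat (ℚ × ℚ)).choose

lemma qqEnum_surj : Function.Surjective qqEnum := (exists_surjective_nat (ℚ × ℚ)).choose_spec

noncomputable def pairSn (K δ : ℝ) (n : ℕ) : Finset (ℚ × ℚ) :=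
  ((Finset.range n).image qqEnum).filter (pairOK K δ)

lemma mem_pairSn {K δ : ℝ} {n : ℕ} {p : ℚ × ℚ} :
    p ∈ pairSn K δ n ↔ (∃ k < n, qqEnum k = p) ∧ pairOK K δ p := by
  simp [pairSn]

lemma badE_prob_eq {Ω : Type*} [MeasurableSpace Ω] {P : Measure Ω} [IsProbabilityMeasure P]
    {B B' : ℝ → Ω → ℝ} (hB : IsStandardBM P B) (hB' : IsStandardBM P B') (K δ ε : ℝ) :
    P (badE B K δ ε) = P (badE B' K δ ε) := by
  have hcover : ∀ C : ℝ → Ω → ℝ, badE C K δ ε =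
      ⋃ n : ℕ, ⋃ p ∈ pairSn K δ n, {ω | ε ≤ |C (p.1 : ℝ) ω - C (p.2 : ℝ) ω|} := by
    intro C
    ext ω
    simp only [badE, mem_iUnion, mem_setOf_eq, mem_pairSn]
    constructor
    · rintro ⟨p, hOK, hle⟩
      obtain ⟨k, hk⟩ := qqEnum_surj p
      exact ⟨k + 1, p, ⟨⟨k, Nat.lt_succ_self _, hk⟩, hOK⟩, hle⟩
    · rintro ⟨n, p, ⟨_, hOK⟩, hle⟩
      exact ⟨p, hOK, hle⟩
  have hmonoS : ∀ C : ℝ → Ω → ℝ, Monotone (fun n =>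
      ⋃ p ∈ pairSn K δ n, {ω | ε ≤ |C (p.1 : ℝ) ω - C (p.2 : ℝ) ω|}) := by
    intro C n m hnm ω hω
    simp only [mem_iUnion, mem_setOf_eq, mem_pairSn] at hω ⊢
    obtain ⟨p, ⟨⟨k, hk, hkp⟩, hOK⟩, hle⟩ := hω
    exact ⟨p, ⟨⟨k, lt_of_lt_of_le hk hnm, hkp⟩, hOK⟩, hle⟩
  have hOKS : ∀ n, ∀ p ∈ pairSn K δ n, 0 ≤ (p.1 : ℝ) ∧ 0 ≤ (p.2 : ℝ) := by
    intro n p hp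
    have h := (mem_pairSn.mp hp).2
    exact ⟨h.1, h.2.2.1⟩
  rw [hcover B, hcover B', Monotone.measure_iUnion (hmonoS B),
    Monotone.measure_iUnion (hmonoS B')]
  congr 1
  funext n
  exact finU_prob_eq hB hB' ε (pairSn K δ n) (hOKS n)

lemma badE_anti {Ω : Type*} (B : ℝ → Ω → ℝ) (K ε : ℝ) :
    Antitone (fun n : ℕ => badE B K (1 / (n + 1)) ε) := by
  intro n m hnm ω hω
  simp only [badE, mem_iUnion, mem_setOf_eq] at hω ⊢
  obtain ⟨p, hp, hle⟩ := hω
  refine ⟨p, ⟨hp.1, hp.2.1, hp.2.2.1, hp.2.2.2.1, le_trans hp.2.2.2.2 ?_⟩, hle⟩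
  apply one_div_le_one_div_of_le (by positivity)
  have : (n : ℝ) ≤ m := Nat.cast_le.mpr hnm
  linarith

lemma badE_tendsto_zero {Ω : Type*} [MeasurableSpace Ω] {P : Measure Ω} [IsProbabilityMeasure P]
    {B : ℝ → Ω → ℝ} (hB : IsStandardBM P B) (K ε : ℝ) (hε : 0 < ε) :
    Tendsto (fun n : ℕ => P (badE B K (1 / (n + 1)) ε)) atTop (nhds 0) := by
  have hBmeas := hB.2.2.1
  have hlim := tendsto_measure_iInter_atTop (ι := ℕ) (μ := P)
    (fun n => (badE_meas hBmeas K (1 / (n + 1)) ε).nullMeasurableSet)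
    (badE_anti B K ε) ⟨0, measure_ne_top _ _⟩
  have hnull : P (⋂ n : ℕ, badE B K (1 / (n + 1)) ε) = 0 := by
    have hsub : (⋂ n : ℕ, badE B K (1 / (n + 1)) ε) ⊆
        {ω | ¬ Continuous fun t => B t ω} := by
      intro ω hω
      simp only [mem_setOf_eq]
      intro hcont
      have hUC : UniformContinuousOn (fun t => B t ω) (Icc (-1) (K + 1)) :=
        isCompact_Icc.uniformContinuousOn_of_continuous hcont.continuousOn
      rw [Metric.uniformContinuousOn_iff] at hUC
      obtain ⟨δ0, hδ0, hδ⟩ := hUC ε hε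
      obtain ⟨n, hn⟩ := exists_nat_one_div_lt hδ0
      have hmem := Set.mem_iInter.mp hω n
      simp only [badE, mem_iUnion, mem_setOf_eq] at hmem
      obtain ⟨p, hOK, hle⟩ := hmem
      have h1 : (p.1 : ℝ) ∈ Icc (-1 : ℝ) (K + 1) :=
        ⟨le_trans (by norm_num) hOK.1, le_trans hOK.2.1 (by linarith)⟩
      have h2 : (p.2 : ℝ) ∈ Icc (-1 : ℝ) (K + 1) :=
        ⟨le_trans (by norm_num) hOK.2.2.1, le_trans hOK.2.2.2.1 (by linarith)⟩
      have hdist : dist (p.1 : ℝ) (p.2 : ℝ) < δ0 := by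
        rw [Real.dist_eq]
        exact lt_of_le_of_lt hOK.2.2.2.2 hn
      have hlt := hδ _ h1 _ h2 hdist
      rw [Real.dist_eq] at hlt
      exact absurd hle (not_le.mpr hlt)
    exact measure_mono_null hsub (ae_iff.mp hB.2.1)
  rwa [hnull] at hlim

/-- Time-changed approximation of martingales (Lemma on DDS time change):
if the continuous martingales `M^{(N)}` start at `0`, have quadratic variations
`Q^{(N)}` with `Q^{(N)}_∞ = ∞` a.s. converging in probability in `C([0,T])`
to a deterministic function `m`, and `M^{(N)}_t = B^{(N)}_{Q^{(N)}_t}` for the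
DDS Brownian motions `B^{(N)}`, then for `A^{(N)}_t = B^{(N)}_{m_t}` one has
`sup_{0 ≤ t ≤ T} |M^{(N)}_t − A^{(N)}_t| → 0` in probability. -/
theorem time_changed_martingale_approx
    {Ω : Type*} {mΩ : MeasurableSpace Ω} (P : Measure Ω) [IsProbabilityMeasure P]
    (ℱ : Filtration ℝ mΩ) (T : ℝ) (hT : 0 < T)
    (M Q B A : ℕ → ℝ → Ω → ℝ) (m : ℝ → ℝ)
    (hmart : ∀ N, Martingale (M N) ℱ P)
    (hMcont : ∀ N, ∀ᵐ ω ∂P, Continuous fun t => M N t ω)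
    (hM0 : ∀ N, ∀ᵐ ω ∂P, M N 0 ω = 0)
    (hQ0 : ∀ N, ∀ᵐ ω ∂P, Q N 0 ω = 0)
    (hQmono : ∀ N, ∀ᵐ ω ∂P, Monotone fun t => Q N t ω)
    (hQcont : ∀ N, ∀ᵐ ω ∂P, Continuous fun t => Q N t ω)
    (hQinf : ∀ N, ∀ᵐ ω ∂P, Tendsto (fun t => Q N t ω) atTop atTop)
    (hBM : ∀ N, IsStandardBM P (B N))
    (hDDS : ∀ N, ∀ᵐ ω ∂P, ∀ t : ℝ, 0 ≤ t → M N t ω = B N (Q N t ω) ω)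
    (hmcont : ContinuousOn m (Set.Icc 0 T))
    (hQconv : ∀ ε : ℝ, 0 < ε →
      Tendsto (fun N => P {ω | ε ≤ ⨆ t : Set.Icc (0:ℝ) T, |Q N t ω - m t|})
        atTop (nhds 0))
    (hA : ∀ N t ω, A N t ω = B N (m t) ω) :
    ∀ ε : ℝ, 0 < ε →
      Tendsto (fun N => P {ω | ε ≤ ⨆ t : Set.Icc (0:ℝ) T, |M N t ω - A N t ω|})
        atTop (nhds 0) := by
  intro ε hε
  haveI : Nonempty (Set.Icc (0:ℝ) T) := ⟨⟨0, le_refl 0, hT.le⟩⟩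
  obtain ⟨K0, hK0⟩ : ∃ C, ∀ t ∈ Set.Icc (0:ℝ) T, |m t| ≤ C := by
    obtain ⟨C, hC⟩ := isCompact_Icc.exists_bound_of_continuousOn hmcont
    exact ⟨C, fun t ht => by simpa using hC t ht⟩
  have hK0nn : 0 ≤ K0 := le_trans (abs_nonneg _) (hK0 0 ⟨le_refl 0, hT.le⟩)
  set K : ℝ := K0 + 2 with hKdef
  have hbdd : ∀ N, ∀ᵐ ω ∂P,
      BddAbove (range fun t : Set.Icc (0:ℝ) T => |Q N (↑t) ω - m ↑t|) := by
    intro N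
    filter_upwards [hQcont N] with ω hc
    have hcont : Continuous fun t : Set.Icc (0:ℝ) T => |Q N (↑t) ω - m ↑t| :=
      ((hc.comp continuous_subtype_val).sub hmcont.restrict).abs
    exact (isCompact_range hcont).bddAbove
  have hm0 : ∀ t ∈ Set.Icc (0:ℝ) T, 0 ≤ m t := by
    intro t0 ht0
    by_contra hneg
    push_neg at hneg
    have hapos : 0 < -m t0 := by linarith
    have h1 := hQconv (-m t0 / 2) (by positivity)
    have h2 : ∀ N, P {ω | -m t0 / 2 ≤ ⨆ t : Set.Icc (0:ℝ) T, |Q N (↑t) ω - m ↑t|} = 1 := by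
      intro N
      have hae : ∀ᵐ ω ∂P,
          ω ∈ {ω | -m t0 / 2 ≤ ⨆ t : Set.Icc (0:ℝ) T, |Q N (↑t) ω - m ↑t|} := by
        filter_upwards [hbdd N, hQmono N, hQ0 N] with ω hb hmono h0
        have hQnn : 0 ≤ Q N t0 ω := h0 ▸ hmono ht0.1
        have hstep : -m t0 / 2 ≤ |Q N t0 ω - m t0| := by
          rw [abs_of_nonneg (by linarith)]; linarith
        exact le_trans hstep (le_ciSup hb ⟨t0, ht0⟩)
      have huniv : {ω | -m t0 / 2 ≤ ⨆ t : Set.Icc (0:ℝ) T, |Q N (↑t) ω - m ↑t|}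
          =ᵐ[P] (Set.univ : Set Ω) := Filter.eventuallyEq_univ.mpr hae
      rw [measure_congr huniv, measure_univ]
    have h3 : Tendsto (fun _ : ℕ => (1 : ENNReal)) atTop (nhds 0) :=
      h1.congr fun N => h2 N
    exact absurd (tendsto_nhds_unique h3 tendsto_const_nhds) (by simp)
  have htd := badE_tendsto_zero (hBM 0) K (ε/2) (half_pos hε)
  rw [ENNReal.tendsto_atTop_zero]
  intro η hη
  have hη2 : (0:ENNReal) < η/2 := ENNReal.half_pos hη.ne'
  obtain ⟨k, hk⟩ := (htd.eventually_lt_const hη2).exists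
  set δE : ℝ := 1/((k:ℝ)+1) with hδE
  have hδEpos : 0 < δE := by positivity
  have hδE1 : δE ≤ 1 := by
    rw [hδE]
    rw [div_le_one (by positivity)]
    have : (0:ℝ) ≤ (k:ℝ) := Nat.cast_nonneg k
    linarith
  set δ0 : ℝ := δE/3 with hδ0
  have hδ0pos : 0 < δ0 := by positivity
  have hδ01 : δ0 ≤ 1/3 := by rw [hδ0]; linarith
  obtain ⟨N0, hN0⟩ := eventually_atTop.mp ((hQconv δ0 hδ0pos).eventually_lt_const hη2)
  refine ⟨N0, fun N hN => ?_⟩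
  have hsub : {ω | ε ≤ ⨆ t : Set.Icc (0:ℝ) T, |M N (↑t) ω - A N (↑t) ω|} ≤ᵐ[P]
      (({ω | δ0 ≤ ⨆ t : Set.Icc (0:ℝ) T, |Q N (↑t) ω - m ↑t|} ∪ badE (B N) K δE (ε/2) : Set Ω)) := by
    filter_upwards [hbdd N, hQmono N, hQcont N, hQ0 N, (hBM N).2.1, hDDS N]
      with ω hb hQm hQc hQ0ω hBc hD
    intro hsup
    have hsup : ε ≤ ⨆ t : Set.Icc (0:ℝ) T, |M N (↑t) ω - A N (↑t) ω| := hsup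
    by_cases hbad : δ0 ≤ ⨆ t : Set.Icc (0:ℝ) T, |Q N (↑t) ω - m ↑t|
    · exact Or.inl hbad
    right
    push_neg at hbad
    have hQclose : ∀ t : Set.Icc (0:ℝ) T, |Q N (↑t) ω - m ↑t| < δ0 :=
      fun t => lt_of_le_of_lt (le_ciSup hb t) hbad
    set g : Set.Icc (0:ℝ) T → ℝ := fun t => |B N (Q N (↑t) ω) ω - B N (m ↑t) ω| with hg
    have hsup' : ε ≤ ⨆ t, g t := by
      have heq : (fun t : Set.Icc (0:ℝ) T => |M N (↑t) ω - A N (↑t) ω|) = g := by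
        funext t
        rw [hg]
        rw [hD (↑t) t.2.1, hA]
      rwa [heq] at hsup
    have hgcont : Continuous g :=
      ((hBc.comp (hQc.comp continuous_subtype_val)).sub (hBc.comp hmcont.restrict)).abs
    obtain ⟨t0, -, hmax⟩ := isCompact_univ.exists_isMaxOn univ_nonempty hgcont.continuousOn
    have hεg : ε ≤ g t0 := le_trans hsup' (ciSup_le fun t => hmax (mem_univ t))
    have hsnn : 0 ≤ Q N (↑t0) ω := by
      have h := hQm t0.2.1
      simp only [hQ0ω] at h
      exact h
    have huu0 : 0 ≤ m ↑t0 := hm0 (↑t0) t0.2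
    have huuK : m ↑t0 ≤ K0 := le_trans (le_abs_self _) (hK0 (↑t0) t0.2)
    have hsu : |Q N (↑t0) ω - m ↑t0| < δ0 := hQclose t0
    have hsu' := abs_lt.mp hsu
    have hsK : Q N (↑t0) ω ≤ K0 + 1 := by linarith
    obtain ⟨θ1, hθ1, hc1⟩ := Metric.continuous_iff.mp hBc (Q N (↑t0) ω) (ε/4) (by positivity)
    obtain ⟨θ2, hθ2, hc2⟩ := Metric.continuous_iff.mp hBc (m ↑t0) (ε/4) (by positivity)
    obtain ⟨q1, hq1a, hq1b⟩ := exists_rat_btwn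
      (lt_add_of_pos_right (Q N (↑t0) ω) (lt_min hθ1 hδ0pos))
    obtain ⟨q2, hq2a, hq2b⟩ := exists_rat_btwn
      (lt_add_of_pos_right (m ↑t0) (lt_min hθ2 hδ0pos))
    have hmin1a := min_le_left θ1 δ0
    have hmin1b := min_le_right θ1 δ0
    have hmin2a := min_le_left θ2 δ0
    have hmin2b := min_le_right θ2 δ0
    have h1θ : dist (q1:ℝ) (Q N (↑t0) ω) < θ1 := by
      rw [Real.dist_eq, abs_lt]; constructor <;> linarith
    have h2θ : dist (q2:ℝ) (m ↑t0) < θ2 := by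
      rw [Real.dist_eq, abs_lt]; constructor <;> linarith
    have hB1 := hc1 _ h1θ
    have hB2 := hc2 _ h2θ
    rw [Real.dist_eq] at hB1 hB2
    have ht1 := abs_sub_le (B N (Q N (↑t0) ω) ω) (B N (q1:ℝ) ω) (B N (m ↑t0) ω)
    have ht2 := abs_sub_le (B N (q1:ℝ) ω) (B N (q2:ℝ) ω) (B N (m ↑t0) ω)
    rw [abs_sub_comm] at hB1
    have hmid : ε/2 ≤ |B N (q1:ℝ) ω - B N (q2:ℝ) ω| := by
      have hg0 : g t0 = |B N (Q N (↑t0) ω) ω - B N (m ↑t0) ω| := rfl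
      rw [hg0] at hεg
      have hB2' : |B N (q2:ℝ) ω - B N (m ↑t0) ω| < ε/4 := hB2
      linarith
    simp only [badE, mem_iUnion, mem_setOf_eq]
    refine ⟨(q1, q2), ⟨?_, ?_, ?_, ?_, ?_⟩, hmid⟩
    · exact le_of_lt (lt_of_le_of_lt hsnn hq1a)
    · have : (q1:ℝ) < Q N (↑t0) ω + min θ1 δ0 := hq1b
      rw [hKdef]; linarith
    · exact le_of_lt (lt_of_le_of_lt huu0 hq2a)
    · have : (q2:ℝ) < m ↑t0 + min θ2 δ0 := hq2b
      rw [hKdef]; linarith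
    · have htr1 := abs_sub_le ((q1:ℝ)) (Q N (↑t0) ω) ((q2:ℝ))
      have htr2 := abs_sub_le (Q N (↑t0) ω) (m ↑t0) ((q2:ℝ))
      have e1 : |(q1:ℝ) - Q N (↑t0) ω| < δ0 := by rw [abs_lt]; constructor <;> linarith
      have e3 : |m ↑t0 - (q2:ℝ)| < δ0 := by rw [abs_lt]; constructor <;> linarith
      have : |(q1:ℝ) - (q2:ℝ)| < 3 * δ0 := by
        calc |(q1:ℝ) - (q2:ℝ)| ≤ |(q1:ℝ) - Q N (↑t0) ω| + |Q N (↑t0) ω - (q2:ℝ)| := htr1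
          _ ≤ |(q1:ℝ) - Q N (↑t0) ω| + (|Q N (↑t0) ω - m ↑t0| + |m ↑t0 - (q2:ℝ)|) := by linarith
          _ < 3 * δ0 := by linarith
      rw [hδ0] at this
      linarith
  calc P {ω | ε ≤ ⨆ t : Set.Icc (0:ℝ) T, |M N (↑t) ω - A N (↑t) ω|}
      ≤ P ({ω | δ0 ≤ ⨆ t : Set.Icc (0:ℝ) T, |Q N (↑t) ω - m ↑t|} ∪ badE (B N) K δE (ε/2)) :=
        measure_mono_ae hsub
    _ ≤ P {ω | δ0 ≤ ⨆ t : Set.Icc (0:ℝ) T, |Q N (↑t) ω - m ↑t|} + P (badE (B N) K δE (ε/2)) :=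
        measure_union_le _ _
    _ = P {ω | δ0 ≤ ⨆ t : Set.Icc (0:ℝ) T, |Q N (↑t) ω - m ↑t|} + P (badE (B 0) K δE (ε/2)) := by
        rw [badE_prob_eq (hBM N) (hBM 0)]
    _ ≤ η/2 + η/2 := add_le_add (le_of_lt (hN0 N hN)) (le_of_lt hk)
    _ = η := ENNReal.add_halves η
end
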